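/- Let N be a positive integer, ρ > 0, let M be an N×N real symmetric matrix, λ ∈ ℝ such that M̃ := M − λ·I is negative semidefinite, and let C ∈ ℝᴺˣ². Define L(G) = (ρ/2) Tr(Gᵀ M G) + Tr(Cᵀ G) for G ∈ ℝᴺˣ². Suppose G′, G″ ∈ ℝᴺˣ² satisfy Tr(G″ᵀ G″) = Tr(G′ᵀ G′) and Tr(Qᵀ G″) ≤ Tr(Qᵀ G′), where Q = C + ρ M̃ G′. Then L(G″) ≤ L(G′). -/

import Mathlib

open Matrix BigOperators

lemma aux_trace_nonneg {n m : ℕ} {P : Matrix (Fin n) (Fin n) ℝ} (hP : P.PosSemidef)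
    (B : Matrix (Fin n) (Fin m) ℝ) : 0 ≤ (Bᵀ * P * B).trace := by
  have hPSD : (Bᵀ * P * B).PosSemidef := by
    have := hP.conjTranspose_mul_mul_same B
    simpa [Matrix.conjTranspose_eq_transpose_of_trivial] using this
  have h : ∀ i, 0 ≤ (Bᵀ * P * B) i i := fun i => by
    exact hPSD.diag_nonneg
  exact Finset.sum_nonneg fun i _ => h i

/-- Descent property of one MM iteration in the `G`-update: with
`M̃ = M − λ·I ⪯ 0`, `L(G) = (ρ/2)Tr(GᵀMG) + Tr(CᵀG)` and `Q = C + ρ M̃ G'`,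
if `Tr(G″ᵀG″) = Tr(G′ᵀG′)` and `Tr(QᵀG″) ≤ Tr(QᵀG′)` then `L(G″) ≤ L(G′)`. -/
theorem mm_descent {N : ℕ} (hN : 0 < N) (ρ : ℝ) (hρ : 0 < ρ)
    (M : Matrix (Fin N) (Fin N) ℝ) (hM : M.IsSymm) (lam : ℝ)
    (hNeg : (-(M - lam • (1 : Matrix (Fin N) (Fin N) ℝ))).PosSemidef)
    (C : Matrix (Fin N) (Fin 2) ℝ)
    (G' G'' : Matrix (Fin N) (Fin 2) ℝ)
    (hnorm : (G''ᵀ * G'').trace = (G'ᵀ * G').trace)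
    (hlin : (((C + ρ • ((M - lam • (1 : Matrix (Fin N) (Fin N) ℝ)) * G'))ᵀ)
        * G'').trace ≤
      (((C + ρ • ((M - lam • (1 : Matrix (Fin N) (Fin N) ℝ)) * G'))ᵀ)
        * G').trace) :
    ρ / 2 * (G''ᵀ * M * G'').trace + (Cᵀ * G'').trace ≤
      ρ / 2 * (G'ᵀ * M * G').trace + (Cᵀ * G').trace := by
  set Mt : Matrix (Fin N) (Fin N) ℝ := M - lam • (1 : Matrix (Fin N) (Fin N) ℝ) with hMt
  have hMtsymm : Mtᵀ = Mt := by
    simp [hMt, Matrix.transpose_sub, hM.eq, Matrix.transpose_smul]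
  -- curvature inequality
  have hcurv : 0 ≤ ((G'' - G')ᵀ * (-Mt) * (G'' - G')).trace :=
    aux_trace_nonneg hNeg _
  -- symmetry of cross terms
  have hcross : (G'ᵀ * Mt * G'').trace = (G''ᵀ * Mt * G').trace := by
    rw [← Matrix.trace_transpose, Matrix.transpose_mul, Matrix.transpose_mul,
      Matrix.transpose_transpose, hMtsymm, Matrix.mul_assoc]
  -- expand curvature
  have hexp : ((G'' - G')ᵀ * (-Mt) * (G'' - G')).trace =
      -(G''ᵀ * Mt * G'').trace + 2 * (G''ᵀ * Mt * G').trace - (G'ᵀ * Mt * G').trace := by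
    simp only [Matrix.transpose_sub, Matrix.sub_mul, Matrix.mul_sub, Matrix.neg_mul,
      Matrix.mul_neg, Matrix.trace_sub, Matrix.trace_neg]
    rw [hcross]
    ring
  -- expand hlin
  have hlin' : (Cᵀ * G'').trace + ρ * (G'ᵀ * Mt * G'').trace ≤
      (Cᵀ * G').trace + ρ * (G'ᵀ * Mt * G').trace := by
    have e : ∀ X : Matrix (Fin N) (Fin 2) ℝ,
        (((C + ρ • (Mt * G'))ᵀ) * X).trace = (Cᵀ * X).trace + ρ * (G'ᵀ * Mt * X).trace := by
      intro X
      simp only [Matrix.transpose_add, Matrix.transpose_smul, Matrix.transpose_mul, hMtsymm,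
        Matrix.add_mul, Matrix.smul_mul, Matrix.trace_add, Matrix.trace_smul, smul_eq_mul,
        Matrix.mul_assoc]
    rw [e G', e G''] at hlin
    exact hlin
  -- relate M-traces to Mt-traces
  have hsplit : ∀ X : Matrix (Fin N) (Fin 2) ℝ,
      (Xᵀ * M * X).trace = (Xᵀ * Mt * X).trace + lam * (Xᵀ * X).trace := by
    intro X
    have : M = Mt + lam • (1 : Matrix (Fin N) (Fin N) ℝ) := by simp [hMt]
    rw [this]
    simp only [Matrix.mul_add, Matrix.add_mul, Matrix.mul_smul, Matrix.smul_mul,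
      Matrix.mul_one, Matrix.trace_add, Matrix.trace_smul, smul_eq_mul]
  rw [hsplit G', hsplit G'', hnorm]
  nlinarith [hcurv, hexp, hlin', hρ]
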